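/- arXiv:0902.1849 — 8 statements merged into one kernel-verified Lean document; each statement's English description precedes it below -/
import Mathlib

section
/- Let c₂ ≥ c₁ > 0, let M ≥ 0, and let g : ℝ → ℝ be a measurable function satisfying c₁ ≤ g(y) ≤ c₂ for all y ∈ ℝ. Define ρ(z) = (M / (2 g(z))) · exp( − ∫₀^z y / g(y) dy ). Then for every z ∈ ℝ one has (M / (2 c₂)) · exp( − z² / (2 c₁) ) ≤ ρ(z) ≤ (M / (2 c₁)) · exp( − z² / (2 c₂) ). -/
open MeasureTheory Real
open scoped Real

private lemma gdb_intInt {c₁ : ℝ} (hc₁ : 0 < c₁) {g : ℝ → ℝ} (hgmeas : Measurable g)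
    (hglb : ∀ y : ℝ, c₁ ≤ g y) (a b : ℝ) :
    IntervalIntegrable (fun y => y / g y) volume a b := by
  have hcont : IntervalIntegrable (fun y : ℝ => |y| / c₁) volume a b :=
    (continuous_abs.div_const c₁).intervalIntegrable a b
  refine hcont.mono_fun' ?_ ?_
  · exact ((measurable_id.div hgmeas).aestronglyMeasurable)
  · filter_upwards with y
    have hg0 : 0 < g y := lt_of_lt_of_le hc₁ (hglb y)
    have : |y / g y| = |y| / g y := by
      rw [abs_div, abs_of_pos hg0]
    simp only [Real.norm_eq_abs, this]
    exact div_le_div_of_nonneg_left (abs_nonneg y) hc₁ (hglb y)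

private lemma gdb_integral_bounds {c₁ c₂ : ℝ} (hc₁ : 0 < c₁) (hc : c₁ ≤ c₂)
    {g : ℝ → ℝ} (hgmeas : Measurable g)
    (hglb : ∀ y : ℝ, c₁ ≤ g y) (hgub : ∀ y : ℝ, g y ≤ c₂) (z : ℝ) :
    z ^ 2 / (2 * c₂) ≤ (∫ y in (0:ℝ)..z, y / g y) ∧
      (∫ y in (0:ℝ)..z, y / g y) ≤ z ^ 2 / (2 * c₁) := by
  have hc₂ : 0 < c₂ := lt_of_lt_of_le hc₁ hc
  have hInt := gdb_intInt hc₁ hgmeas hglb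
  have hcInt : ∀ c a b : ℝ, IntervalIntegrable (fun y => y / c) volume a b :=
    fun c a b => (continuous_id.div_const c).intervalIntegrable a b
  have key : ∀ y : ℝ, y ≤ 0 → ∀ a b : ℝ, 0 < a → a ≤ b → y / a ≤ y / b := by
    intro y hy a b ha hab
    rw [div_eq_mul_inv, div_eq_mul_inv]
    exact mul_le_mul_of_nonpos_left (inv_anti₀ ha hab) hy
  have hdivint : ∀ c : ℝ, ∀ a b : ℝ, (∫ y in a..b, y / c) = (b ^ 2 - a ^ 2) / 2 / c := by
    intro c a b
    rw [intervalIntegral.integral_div, integral_id]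
  rcases le_or_gt 0 z with hz | hz
  · constructor
    · have := intervalIntegral.integral_mono_on hz
        ((continuous_id.div_const c₂).intervalIntegrable 0 z) (hInt 0 z)
        (fun y hy => by
          have hy0 : 0 ≤ y := hy.1
          have hg0 : 0 < g y := lt_of_lt_of_le hc₁ (hglb y)
          exact div_le_div_of_nonneg_left hy0 hg0 (hgub y))
      calc z ^ 2 / (2 * c₂) = (z ^ 2 - 0 ^ 2) / 2 / c₂ := by ring
        _ = ∫ y in (0:ℝ)..z, y / c₂ := (hdivint c₂ 0 z).symm
        _ ≤ _ := this
    · have := intervalIntegral.integral_mono_on hz (hInt 0 z)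
        ((continuous_id.div_const c₁).intervalIntegrable 0 z)
        (fun y hy => by
          have hy0 : 0 ≤ y := hy.1
          exact div_le_div_of_nonneg_left hy0 hc₁ (hglb y))
      calc (∫ y in (0:ℝ)..z, y / g y) ≤ ∫ y in (0:ℝ)..z, y / c₁ := this
        _ = (z ^ 2 - 0 ^ 2) / 2 / c₁ := hdivint c₁ 0 z
        _ = z ^ 2 / (2 * c₁) := by ring
  · have hz' : z ≤ 0 := hz.le
    have hsymm : (∫ y in (0:ℝ)..z, y / g y) = -∫ y in z..(0:ℝ), y / g y := by
      rw [intervalIntegral.integral_symm]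
    constructor
    · have : (∫ y in z..(0:ℝ), y / g y) ≤ ∫ y in z..(0:ℝ), y / c₂ :=
        intervalIntegral.integral_mono_on hz' (hInt z 0) (hcInt c₂ z 0)
        (fun y hy => key y hy.2 (g y) c₂ (lt_of_lt_of_le hc₁ (hglb y)) (hgub y))
      have h2 : (∫ y in z..(0:ℝ), y / c₂) = -(z ^ 2 / (2 * c₂)) := by
        rw [hdivint c₂ z 0]; ring
      rw [hsymm]
      linarith
    · have : (∫ y in z..(0:ℝ), y / c₁) ≤ ∫ y in z..(0:ℝ), y / g y :=
        intervalIntegral.integral_mono_on hz' (hcInt c₁ z 0) (hInt z 0)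
        (fun y hy => key y hy.2 c₁ (g y) hc₁ (hglb y))
      have h2 : (∫ y in z..(0:ℝ), y / c₁) = -(z ^ 2 / (2 * c₁)) := by
        rw [hdivint c₁ z 0]; ring
      rw [hsymm]
      linarith

/-- Nourdin–Viens density formula: Gaussian lower and upper bounds for the density
`ρ(z) = (M / (2 g(z))) * exp(-∫₀^z y / g(y) dy)` when `c₁ ≤ g ≤ c₂`. -/
theorem gaussian_density_bounds
    (c₁ c₂ M : ℝ) (hc₁ : 0 < c₁) (hc : c₁ ≤ c₂) (hM : 0 ≤ M)
    (g : ℝ → ℝ) (hgmeas : Measurable g)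
    (hglb : ∀ y : ℝ, c₁ ≤ g y) (hgub : ∀ y : ℝ, g y ≤ c₂)
    (ρ : ℝ → ℝ)
    (hρ : ∀ z : ℝ, ρ z = M / (2 * g z) * Real.exp (-∫ y in (0:ℝ)..z, y / g y)) :
    ∀ z : ℝ,
      M / (2 * c₂) * Real.exp (-(z ^ 2) / (2 * c₁)) ≤ ρ z ∧
      ρ z ≤ M / (2 * c₁) * Real.exp (-(z ^ 2) / (2 * c₂)) := by
  intro z
  have hc₂ : 0 < c₂ := lt_of_lt_of_le hc₁ hc
  have hg0 : 0 < g z := lt_of_lt_of_le hc₁ (hglb z)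
  obtain ⟨hI1, hI2⟩ := gdb_integral_bounds hc₁ hc hgmeas hglb hgub z
  rw [hρ z]
  constructor
  · have hfrac : M / (2 * c₂) ≤ M / (2 * g z) :=
      div_le_div_of_nonneg_left hM (by positivity) (by linarith [hgub z])
    have hexp : Real.exp (-(z ^ 2) / (2 * c₁)) ≤ Real.exp (-∫ y in (0:ℝ)..z, y / g y) := by
      apply Real.exp_le_exp.2
      rw [neg_div]
      linarith
    exact mul_le_mul hfrac hexp (Real.exp_pos _).le (by positivity)
  · have hfrac : M / (2 * g z) ≤ M / (2 * c₁) :=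
      div_le_div_of_nonneg_left hM (by positivity) (by linarith [hglb z])
    have hexp : Real.exp (-∫ y in (0:ℝ)..z, y / g y) ≤ Real.exp (-(z ^ 2) / (2 * c₂)) := by
      apply Real.exp_le_exp.2
      rw [neg_div]
      linarith
    exact mul_le_mul hfrac hexp (Real.exp_pos _).le (by positivity)
end

section
/- Let d ≥ 1, let μ be a nonzero nonnegative Borel measure on ℝ^d with ∫_{ℝ^d} (1 + |ξ|²)^{-1} μ(dξ) < ∞, and let T > 0. Then there exists a constant k₁ > 0 such that for all t ∈ [0, T]: k₁ · t ≤ ∫₀^t ∫_{ℝ^d} exp(−8π² s |ξ|²) μ(dξ) ds. -/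
open MeasureTheory Real
open scoped Real

/-- Lower bound `k₁ t ≤ ∫₀^t ∫_{ℝ^d} |𝓕G_s(ξ)|² μ(dξ) ds` for the heat kernel,
where `|𝓕G_s(ξ)|² = exp(-8π² s |ξ|²)`, under Dalang's condition on the nonzero
spectral measure `μ`. -/
theorem heat_fourier_lower_bound
    (d : ℕ) (hd : 1 ≤ d)
    (μ : Measure (EuclideanSpace ℝ (Fin d))) (hμ : μ ≠ 0)
    (hdalang : ∫⁻ ξ, ENNReal.ofReal ((1 + ‖ξ‖ ^ 2)⁻¹) ∂μ < ⊤)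
    (T : ℝ) (hT : 0 < T) :
    ∃ k₁ > (0 : ℝ), ∀ t ∈ Set.Icc (0 : ℝ) T,
      ENNReal.ofReal (k₁ * t) ≤
        ∫⁻ s in Set.Ioc (0 : ℝ) t,
          ∫⁻ ξ, ENNReal.ofReal (Real.exp (-(8 * π ^ 2 * s * ‖ξ‖ ^ 2))) ∂μ := by
  -- find a ball with positive measure
  obtain ⟨R, hR⟩ : ∃ R : ℕ, 0 < μ (Metric.ball 0 R) := by
    by_contra h
    push_neg at h
    apply hμ
    ext s hs
    simp only [Measure.coe_zero, Pi.zero_apply]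
    have : μ Set.univ = 0 := by
      rw [← Metric.iUnion_ball_nat (0 : EuclideanSpace ℝ (Fin d))]
      exact measure_iUnion_null fun n => le_antisymm (h n) zero_le
    exact measure_mono_null (Set.subset_univ s) this
  set B := Metric.ball (0 : EuclideanSpace ℝ (Fin d)) R with hB
  -- B has finite measure
  have hc : (0:ℝ) < (1 + (R:ℝ)^2)⁻¹ := by positivity
  have hfin : μ B < ⊤ := by
    have hle : ENNReal.ofReal ((1 + (R:ℝ)^2)⁻¹) * μ B ≤
        ∫⁻ ξ, ENNReal.ofReal ((1 + ‖ξ‖ ^ 2)⁻¹) ∂μ := by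
      rw [← setLIntegral_const B _]
      refine le_trans (setLIntegral_mono' Metric.isOpen_ball.measurableSet ?_)
        (setLIntegral_le_lintegral _ _)
      intro ξ hξ
      refine ENNReal.ofReal_le_ofReal ?_
      have hξR : ‖ξ‖ < R := by simpa [B, Metric.mem_ball, dist_zero_right] using hξ
      have h0 : (0:ℝ) ≤ ‖ξ‖ := norm_nonneg _
      have : (1:ℝ) + ‖ξ‖^2 ≤ 1 + (R:ℝ)^2 := by nlinarith
      exact inv_anti₀ (by positivity) this
    by_contra htop
    push_neg at htop
    have : μ B = ⊤ := top_le_iff.mp htop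
    rw [this, ENNReal.mul_top (ENNReal.ofReal_pos.2 hc).ne'] at hle
    exact (lt_irrefl ⊤ (lt_of_le_of_lt hle hdalang)).elim
  refine ⟨Real.exp (-(8 * π ^ 2 * T * (R:ℝ) ^ 2)) * (μ B).toReal, ?_, ?_⟩
  · have : 0 < (μ B).toReal := ENNReal.toReal_pos hR.ne' hfin.ne
    positivity
  intro t ht
  obtain ⟨ht0, htT⟩ := ht
  calc ENNReal.ofReal (Real.exp (-(8 * π ^ 2 * T * (R:ℝ) ^ 2)) * (μ B).toReal * t)
      = ENNReal.ofReal (Real.exp (-(8 * π ^ 2 * T * (R:ℝ) ^ 2)) * (μ B).toReal) *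
        ENNReal.ofReal t := ENNReal.ofReal_mul (by positivity)
    _ ≤ (ENNReal.ofReal (Real.exp (-(8 * π ^ 2 * T * (R:ℝ) ^ 2))) * μ B) *
        ENNReal.ofReal t := by
        gcongr
        rw [ENNReal.ofReal_mul (Real.exp_pos _).le]
        gcongr
        exact ENNReal.ofReal_toReal_le
    _ = ∫⁻ _ in Set.Ioc (0:ℝ) t,
          (ENNReal.ofReal (Real.exp (-(8 * π ^ 2 * T * (R:ℝ) ^ 2))) * μ B) := by
        rw [setLIntegral_const, Real.volume_Ioc, sub_zero]
    _ ≤ ∫⁻ s in Set.Ioc (0:ℝ) t,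
          ∫⁻ ξ, ENNReal.ofReal (Real.exp (-(8 * π ^ 2 * s * ‖ξ‖ ^ 2))) ∂μ := by
        refine setLIntegral_mono' measurableSet_Ioc ?_
        intro s hs
        obtain ⟨hs0, hst⟩ := hs
        calc ENNReal.ofReal (Real.exp (-(8 * π ^ 2 * T * (R:ℝ) ^ 2))) * μ B
            = ∫⁻ _ in B, ENNReal.ofReal (Real.exp (-(8 * π ^ 2 * T * (R:ℝ) ^ 2))) ∂μ := by
              rw [setLIntegral_const]
          _ ≤ ∫⁻ ξ in B, ENNReal.ofReal (Real.exp (-(8 * π ^ 2 * s * ‖ξ‖ ^ 2))) ∂μ := by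
              refine setLIntegral_mono' Metric.isOpen_ball.measurableSet ?_
              intro ξ hξ
              refine ENNReal.ofReal_le_ofReal (Real.exp_le_exp.2 (neg_le_neg ?_))
              have hξR : ‖ξ‖ < R := by simpa [B, Metric.mem_ball, dist_zero_right] using hξ
              have h0 : (0:ℝ) ≤ ‖ξ‖ := norm_nonneg _
              have hsT : s ≤ T := le_trans hst htT
              have hπ2 : (0:ℝ) ≤ 8 * π ^ 2 := by positivity
              have h1 : ‖ξ‖ ^ 2 ≤ (R:ℝ) ^ 2 := by nlinarith
              nlinarith [mul_le_mul hsT h1 (sq_nonneg ‖ξ‖) hT.le]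
          _ ≤ ∫⁻ ξ, ENNReal.ofReal (Real.exp (-(8 * π ^ 2 * s * ‖ξ‖ ^ 2))) ∂μ :=
              setLIntegral_le_lintegral _ _
end

section
/- Let d ≥ 1, let η ∈ (0,1), and let μ be a nonnegative Borel measure on ℝ^d with ∫_{ℝ^d} (1 + |ξ|²)^{-η} μ(dξ) < ∞. Let T > 0 and β ∈ (0, 1−η]. Then there exists a constant k₂ > 0 such that for all t ∈ [0, T]: ∫₀^t ∫_{ℝ^d} exp(−8π² s |ξ|²) μ(dξ) ds ≤ k₂ · t^β. -/
open MeasureTheory Real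
open scoped Real ENNReal

private lemma exp_neg_le_rpow {y η : ℝ} (hy : 0 < y) (hη0 : 0 < η) (hη1 : η ≤ 1) :
    Real.exp (-y) ≤ y ^ (-η) := by
  rw [Real.rpow_neg hy.le, Real.exp_neg]
  apply inv_anti₀
  · exact Real.rpow_pos_of_pos hy η
  · rcases le_total y 1 with h | h
    · calc y ^ η ≤ 1 := Real.rpow_le_one hy.le h hη0.le
        _ ≤ Real.exp y := by nlinarith [Real.add_one_le_exp y, hy]
    · calc y ^ η ≤ y ^ (1 : ℝ) := Real.rpow_le_rpow_of_exponent_le h hη1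
        _ = y := Real.rpow_one y
        _ ≤ Real.exp y := by nlinarith [Real.add_one_le_exp y]

/-- Upper bound `∫₀^t ∫_{ℝ^d} |𝓕G_s(ξ)|² μ(dξ) ds ≤ k₂ t^β` for the heat kernel,
where `|𝓕G_s(ξ)|² = exp(-8π² s |ξ|²)`, under Hypothesis `H_η` on the spectral
measure `μ`, for any `β ∈ (0, 1-η]`. -/
theorem heat_fourier_upper_bound
    (d : ℕ) (hd : 1 ≤ d)
    (η : ℝ) (hη : η ∈ Set.Ioo (0 : ℝ) 1)
    (μ : Measure (EuclideanSpace ℝ (Fin d)))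
    (hμint : ∫⁻ ξ, ENNReal.ofReal ((1 + ‖ξ‖ ^ 2) ^ (-η)) ∂μ < ⊤)
    (T : ℝ) (hT : 0 < T)
    (β : ℝ) (hβ : β ∈ Set.Ioc (0 : ℝ) (1 - η)) :
    ∃ k₂ > (0 : ℝ), ∀ t ∈ Set.Icc (0 : ℝ) T,
      (∫⁻ s in Set.Ioc (0 : ℝ) t,
          ∫⁻ ξ, ENNReal.ofReal (Real.exp (-(8 * π ^ 2 * s * ‖ξ‖ ^ 2))) ∂μ)
        ≤ ENNReal.ofReal (k₂ * t ^ β) := by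
  obtain ⟨hη0, hη1⟩ := hη
  obtain ⟨hβ0, hβ1⟩ := hβ
  have ha : (0 : ℝ) < 8 * π ^ 2 := by positivity
  set a : ℝ := 8 * π ^ 2 with ha_def
  set I : ℝ≥0∞ := ∫⁻ ξ, ENNReal.ofReal ((1 + ‖ξ‖ ^ 2) ^ (-η)) ∂μ with hI_def
  set J : ℝ := I.toReal + 1 with hJ_def
  have hJpos : 0 < J := by positivity
  have hIJ : I ≤ ENNReal.ofReal J := by
    calc I = ENNReal.ofReal I.toReal := (ENNReal.ofReal_toReal hμint.ne).symm
      _ ≤ ENNReal.ofReal J := ENNReal.ofReal_le_ofReal (by simp [hJ_def])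
  set C : ℝ := Real.exp (a * T) * a ^ (-η) with hC_def
  have hCpos : 0 < C := by positivity
  have h1ηβ : 0 ≤ 1 - η - β := by linarith
  have h1η : 0 < 1 - η := by linarith
  refine ⟨C * J / (1 - η) * T ^ (1 - η - β),
    mul_pos (div_pos (mul_pos hCpos hJpos) h1η) (Real.rpow_pos_of_pos hT _), ?_⟩
  rintro t ⟨ht0, htT⟩
  rcases eq_or_lt_of_le ht0 with rfl | ht0
  · simp
  -- pointwise bound
  have key : ∀ s ∈ Set.Ioc (0 : ℝ) t, ∀ ξ : EuclideanSpace ℝ (Fin d),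
      Real.exp (-(a * s * ‖ξ‖ ^ 2)) ≤ C * s ^ (-η) * (1 + ‖ξ‖ ^ 2) ^ (-η) := by
    intro s hs ξ
    set x : ℝ := ‖ξ‖ ^ 2 with hx_def
    have hx0 : 0 ≤ x := by positivity
    have hy : 0 < a * s * (1 + x) :=
      mul_pos (mul_pos ha hs.1) (by linarith)
    have h1 : Real.exp (-(a * s * x)) = Real.exp (a * s) * Real.exp (-(a * s * (1 + x))) := by
      rw [← Real.exp_add]; ring_nf
    rw [h1]
    have h2 : Real.exp (a * s) ≤ Real.exp (a * T) :=
      Real.exp_le_exp.2 (by nlinarith [hs.1, hs.2.trans htT])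
    have h3 : Real.exp (-(a * s * (1 + x))) ≤ (a * s * (1 + x)) ^ (-η) :=
      exp_neg_le_rpow hy hη0 hη1.le
    have h4 : (a * s * (1 + x)) ^ (-η) = a ^ (-η) * s ^ (-η) * (1 + x) ^ (-η) := by
      rw [Real.mul_rpow (mul_pos ha hs.1).le (by linarith : (0:ℝ) ≤ 1 + x),
        Real.mul_rpow ha.le hs.1.le]
    calc Real.exp (a * s) * Real.exp (-(a * s * (1 + x)))
        ≤ Real.exp (a * T) * (a ^ (-η) * s ^ (-η) * (1 + x) ^ (-η)) := by
          rw [← h4]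
          exact mul_le_mul h2 h3 (Real.exp_pos _).le (Real.exp_pos _).le
      _ = C * s ^ (-η) * (1 + x) ^ (-η) := by rw [hC_def]; ring
  -- inner integral bound
  have inner : ∀ s ∈ Set.Ioc (0 : ℝ) t,
      (∫⁻ ξ, ENNReal.ofReal (Real.exp (-(a * s * ‖ξ‖ ^ 2))) ∂μ)
        ≤ ENNReal.ofReal (C * s ^ (-η)) * ENNReal.ofReal J := by
    intro s hs
    have hs0 : 0 < s := hs.1
    calc (∫⁻ ξ, ENNReal.ofReal (Real.exp (-(a * s * ‖ξ‖ ^ 2))) ∂μ)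
        ≤ ∫⁻ ξ, ENNReal.ofReal (C * s ^ (-η)) *
            ENNReal.ofReal ((1 + ‖ξ‖ ^ 2) ^ (-η)) ∂μ := by
          refine lintegral_mono fun ξ => ?_
          rw [← ENNReal.ofReal_mul (mul_nonneg hCpos.le (Real.rpow_nonneg hs0.le _))]
          exact ENNReal.ofReal_le_ofReal (key s hs ξ)
      _ = ENNReal.ofReal (C * s ^ (-η)) * I := by
          rw [lintegral_const_mul' _ _ ENNReal.ofReal_ne_top]
      _ ≤ ENNReal.ofReal (C * s ^ (-η)) * ENNReal.ofReal J :=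
          mul_le_mul_right hIJ _
  -- outer integral
  have houter : (∫⁻ s in Set.Ioc (0 : ℝ) t,
        ∫⁻ ξ, ENNReal.ofReal (Real.exp (-(a * s * ‖ξ‖ ^ 2))) ∂μ)
      ≤ (∫⁻ s in Set.Ioc (0 : ℝ) t, ENNReal.ofReal (C * s ^ (-η))) * ENNReal.ofReal J := by
    rw [← lintegral_mul_const' _ _ ENNReal.ofReal_ne_top]
    refine lintegral_mono_ae ?_
    filter_upwards [ae_restrict_mem measurableSet_Ioc] with s hs
    exact inner s hs
  -- compute the outer integral of s^(-η)
  have hint : IntervalIntegrable (fun s : ℝ => s ^ (-η)) volume 0 t :=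
    intervalIntegral.intervalIntegrable_rpow' (by linarith)
  have hintC : IntegrableOn (fun s : ℝ => C * s ^ (-η)) (Set.Ioc (0 : ℝ) t) volume :=
    (hint.1.const_mul C)
  have hcompute : (∫⁻ s in Set.Ioc (0 : ℝ) t, ENNReal.ofReal (C * s ^ (-η)))
      = ENNReal.ofReal (C * (t ^ (1 - η) / (1 - η))) := by
    rw [← ofReal_integral_eq_lintegral_ofReal hintC ?_]
    · congr 1
      rw [← intervalIntegral.integral_of_le ht0.le,
        intervalIntegral.integral_const_mul]
      rw [integral_rpow (Or.inl (by linarith))]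
      rw [Real.zero_rpow (by intro h; linarith [h])]
      ring_nf
    · filter_upwards [ae_restrict_mem measurableSet_Ioc] with s hs
      have := hs.1; positivity
  -- final real estimate
  have hfinal : C * (t ^ (1 - η) / (1 - η)) * J
      ≤ C * J / (1 - η) * T ^ (1 - η - β) * t ^ β := by
    have ht' : t ^ (1 - η) = t ^ β * t ^ (1 - η - β) := by
      rw [← Real.rpow_add ht0]; ring_nf
    have htT' : t ^ (1 - η - β) ≤ T ^ (1 - η - β) :=
      Real.rpow_le_rpow ht0.le htT h1ηβ
    calc C * (t ^ (1 - η) / (1 - η)) * J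
        = C * J / (1 - η) * t ^ (1 - η - β) * t ^ β := by rw [ht']; ring
      _ ≤ C * J / (1 - η) * T ^ (1 - η - β) * t ^ β := by
          gcongr
  calc (∫⁻ s in Set.Ioc (0 : ℝ) t,
        ∫⁻ ξ, ENNReal.ofReal (Real.exp (-(a * s * ‖ξ‖ ^ 2))) ∂μ)
      ≤ (∫⁻ s in Set.Ioc (0 : ℝ) t, ENNReal.ofReal (C * s ^ (-η))) * ENNReal.ofReal J :=
        houter
    _ = ENNReal.ofReal (C * (t ^ (1 - η) / (1 - η)) * J) := by
        rw [hcompute, ← ENNReal.ofReal_mul (mul_nonneg hCpos.le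
          (div_nonneg (Real.rpow_nonneg ht0.le _) h1η.le))]
    _ ≤ ENNReal.ofReal (C * J / (1 - η) * T ^ (1 - η - β) * t ^ β) :=
        ENNReal.ofReal_le_ofReal hfinal
end

section
/- There exists a constant c₁ > 0 such that for every t ≥ 0 and every r > 0: c₁ · min(t, t³) / (1 + r²) ≤ ∫₀^t ( sin(2π s r) / (2π r) )² ds. -/
open MeasureTheory Real
open scoped Real

lemma sin_sq_antideriv (a : ℝ) (ha : a ≠ 0) (s : ℝ) :
    HasDerivAt (fun s => s / 2 - Real.sin (a * s) * Real.cos (a * s) / (2 * a))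
      (Real.sin (a * s) ^ 2) s := by
  have h1 : HasDerivAt (fun s : ℝ => a * s) a s := by
    simpa using (hasDerivAt_id s).const_mul a
  have hm := (h1.sin.mul h1.cos).div_const (2 * a)
  have h := ((hasDerivAt_id s).div_const 2).sub hm
  refine h.congr_deriv ?_
  have hpy := Real.sin_sq_add_cos_sq (a * s)
  field_simp
  linear_combination (-1) * hpy

/-- Lower bound for the time-integrated squared Fourier transform of the wave kernel:
`c₁ min(t, t³)/(1 + r²) ≤ ∫₀^t (sin(2πsr)/(2πr))² ds`. -/
theorem wave_fourier_lower_bound :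
    ∃ c₁ > (0 : ℝ), ∀ t : ℝ, 0 ≤ t → ∀ r : ℝ, 0 < r →
      c₁ * min t (t ^ 3) / (1 + r ^ 2)
        ≤ ∫ s in (0 : ℝ)..t, (Real.sin (2 * π * s * r) / (2 * π * r)) ^ 2 := by
  refine ⟨1/200, by norm_num, fun t ht r hr => ?_⟩
  have hπ := Real.pi_pos
  have hπ2 := Real.pi_lt_d2
  have ha0 : 0 < 2 * π * r := by positivity
  set a : ℝ := 2 * π * r with ha
  have harg : ∀ s : ℝ, 2 * π * s * r = a * s := fun s => by rw [ha]; ring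
  have hr2 : (0:ℝ) < 1 + r ^ 2 := by positivity
  have hcont : Continuous fun s : ℝ => (Real.sin (2 * π * s * r) / (2 * π * r)) ^ 2 := by
    fun_prop
  rcases le_or_gt 1 (a * t) with hat | hat
  · -- case a*t ≥ 1
    have ht0 : 0 < t := by nlinarith
    have key : ∫ s in (0:ℝ)..t, Real.sin (a * s) ^ 2
        = t / 2 - Real.sin (a * t) * Real.cos (a * t) / (2 * a) := by
      rw [intervalIntegral.integral_eq_sub_of_hasDerivAt
        (fun s _ => sin_sq_antideriv a (ne_of_gt ha0) s)
        (((Real.continuous_sin.comp (continuous_const.mul continuous_id)).pow 2).intervalIntegrable 0 t)]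
      simp
    have hInt : ∫ s in (0:ℝ)..t, (Real.sin (2 * π * s * r) / (2 * π * r)) ^ 2
        = (t / 2 - Real.sin (a * t) * Real.cos (a * t) / (2 * a)) / a ^ 2 := by
      have h2 : ∀ s : ℝ, (Real.sin (2 * π * s * r) / (2 * π * r)) ^ 2
          = Real.sin (a * s) ^ 2 / a ^ 2 := by
        intro s; rw [harg, ha, div_pow]
      simp only [h2]
      rw [intervalIntegral.integral_div, key]
    rw [hInt]
    have hsc : Real.sin (a * t) * Real.cos (a * t) ≤ 1 / 2 := by
      nlinarith [sq_nonneg (Real.sin (a * t) - Real.cos (a * t)),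
        Real.sin_sq_add_cos_sq (a * t)]
    have hX : t / 4 ≤ t / 2 - Real.sin (a * t) * Real.cos (a * t) / (2 * a) := by
      have h2 : Real.sin (a * t) * Real.cos (a * t) / (2 * a) ≤ t / 4 := by
        rw [div_le_div_iff₀ (by positivity) (by norm_num)]
        nlinarith
      linarith
    have hstep : (1/200) * min t (t ^ 3) / (1 + r ^ 2) ≤ (t / 4) / a ^ 2 := by
      rw [div_le_div_iff₀ hr2 (by positivity)]
      have hmin : min t (t ^ 3) ≤ t := min_le_left _ _
      have hm0 : (0:ℝ) ≤ min t (t ^ 3) := le_min ht0.le (by positivity)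
      have ha2 : a ^ 2 = 4 * π ^ 2 * r ^ 2 := by rw [ha]; ring
      rw [ha2]
      have hπsq : π ^ 2 < 10 := by nlinarith
      nlinarith [mul_nonneg ht0.le (sq_nonneg r), mul_le_mul_of_nonneg_right hmin (by positivity : (0:ℝ) ≤ 4 * π ^ 2 * r ^ 2), mul_nonneg (mul_nonneg ht0.le (sq_nonneg r)) (sq_nonneg π)]
    refine hstep.trans ?_
    gcongr
  · -- case a*t < 1
    have hle : ∀ s ∈ Set.Icc (0:ℝ) t,
        (3/4 * s) ^ 2 ≤ (Real.sin (2 * π * s * r) / (2 * π * r)) ^ 2 := by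
      intro s hs
      rw [harg]
      rcases eq_or_lt_of_le hs.1 with h0 | h0
      · simp [← h0]
      · have has : 0 < a * s := by positivity
        have has1 : a * s ≤ 1 := by nlinarith [hs.2]
        have hsin := Real.sin_gt_sub_cube has
        have h1 : 3/4 * (a * s) ≤ Real.sin (a * s) := by nlinarith [mul_nonneg (sub_nonneg.2 has1) (mul_nonneg has.le has.le), mul_nonneg (sub_nonneg.2 has1) has.le]
        have h2 : 3/4 * s ≤ Real.sin (a * s) / a := by
          rw [le_div_iff₀ ha0]; nlinarith
        exact pow_le_pow_left₀ (by positivity) h2 2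
    have hmono : (∫ s in (0:ℝ)..t, (3/4 * s) ^ 2)
        ≤ ∫ s in (0:ℝ)..t, (Real.sin (2 * π * s * r) / (2 * π * r)) ^ 2 :=
      intervalIntegral.integral_mono_on ht
        ((by fun_prop : Continuous fun s : ℝ => (3/4 * s) ^ 2).intervalIntegrable 0 t)
        (hcont.intervalIntegrable 0 t) hle
    have hval : (∫ s in (0:ℝ)..t, (3/4 * s) ^ 2) = 3/16 * t ^ 3 := by
      have h2 : ∀ s : ℝ, (3/4 * s) ^ 2 = 9/16 * s ^ 2 := fun s => by ring
      simp only [h2]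
      rw [intervalIntegral.integral_const_mul, integral_pow]
      ring
    have hfin : (1/200) * min t (t ^ 3) / (1 + r ^ 2) ≤ 3/16 * t ^ 3 := by
      rw [div_le_iff₀ hr2]
      have hmin : min t (t ^ 3) ≤ t ^ 3 := min_le_right _ _
      have hm0 : (0:ℝ) ≤ min t (t ^ 3) := le_min ht (by positivity)
      nlinarith [pow_nonneg ht 3, mul_nonneg (pow_nonneg ht 3) (sq_nonneg r)]
    linarith [hmono, hval.symm.le]
end

section
/- Let d ≥ 1, let η ∈ (0,1), let μ be a nonnegative Borel measure on ℝ^d with ∫_{ℝ^d} (1 + |ξ|²)^{-η} μ(dξ) < ∞, and let T > 0. Define f_s(ξ) = ( sin(2π s |ξ|) / (2π |ξ|) )² for ξ ≠ 0 and f_s(0) = s². Then there exists a constant d₃ > 0 such that for all t ∈ [0, T]: ∫₀^t ∫_{ℝ^d} f_s(ξ) μ(dξ) ds ≤ d₃ · t^{3−2η}. -/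
open MeasureTheory Real
open scoped Real Classical

lemma ptwise (η T : ℝ) (hη0 : 0 < η) (hη1 : η < 1) (hT : 0 < T)
    (s : ℝ) (hs : 0 < s) (hsT : s ≤ T) (r : ℝ) (hr : 0 ≤ r) (v : ℝ)
    (hv1 : v ≤ s ^ 2) (hv2 : r ≠ 0 → v ≤ 1 / r ^ 2) :
    v ≤ (2 ^ η * (T ^ (2 * η) + 1)) * s ^ (2 - 2 * η) * (1 + r ^ 2) ^ (-η) := by
  have hb : (0:ℝ) < 1 + r ^ 2 := by positivity
  have hTnn : (0:ℝ) ≤ T ^ (2*η) := by positivity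
  have hC1 : (1:ℝ) ≤ T ^ (2*η) + 1 := by linarith
  have hp : (0:ℝ) < 2 ^ η := Real.rpow_pos_of_pos (by norm_num) η
  have e : (2:ℝ) ^ η * 2 ^ (-η) = 1 := by
    rw [← Real.rpow_add (by norm_num)]; simp
  have hs2 : s ^ 2 = s ^ (2 - 2*η) * s ^ (2*η) := by
    rw [← Real.rpow_natCast s 2, ← Real.rpow_add hs]; norm_num
  rcases le_or_gt (r^2) 1 with h1 | h1
  · have h2 : (2:ℝ) ^ (-η) ≤ (1 + r^2) ^ (-η) :=
      Real.rpow_le_rpow_of_nonpos hb (by linarith) (by linarith)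
    have h3 : s ^ (2*η) ≤ T ^ (2*η) :=
      Real.rpow_le_rpow hs.le hsT (by positivity)
    have h4 : T ^ (2*η) ≤ 2 ^ η * (T ^ (2*η) + 1) * (1 + r^2) ^ (-η) := by
      calc T ^ (2*η) ≤ (T ^ (2*η) + 1) * 1 := by linarith
        _ = (2 ^ η * (T ^ (2*η) + 1)) * 2 ^ (-η) := by rw [← e]; ring
        _ ≤ 2 ^ η * (T ^ (2*η) + 1) * (1 + r^2) ^ (-η) :=
            mul_le_mul_of_nonneg_left h2 (by positivity)
    calc v ≤ s ^ 2 := hv1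
      _ = s ^ (2-2*η) * s ^ (2*η) := hs2
      _ ≤ s ^ (2-2*η) * T ^ (2*η) :=
          mul_le_mul_of_nonneg_left h3 (Real.rpow_nonneg hs.le _)
      _ ≤ s ^ (2-2*η) * (2 ^ η * (T ^ (2*η) + 1) * (1 + r^2) ^ (-η)) :=
          mul_le_mul_of_nonneg_left h4 (Real.rpow_nonneg hs.le _)
      _ = (2 ^ η * (T ^ (2*η) + 1)) * s ^ (2-2*η) * (1 + r^2) ^ (-η) := by ring
  · have hrpos : 0 < r := by nlinarith
    have hr2 : (0:ℝ) < r ^ 2 := by positivity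
    have hm : v ≤ min (s^2) (1/r^2) := le_min hv1 (hv2 hrpos.ne')
    have hmin : min (s^2) (1/r^2) ≤ s ^ (2-2*η) * (r^2) ^ (-η) := by
      set m := min (s^2) (1/r^2) with hmdef
      have hmpos : 0 < m := lt_min (by positivity) (by positivity)
      have hmm : m = m ^ (1-η) * m ^ η := by
        rw [← Real.rpow_add hmpos]; norm_num
      rw [hmm]
      have e1 : m ^ (1-η) ≤ (s^2) ^ (1-η) :=
        Real.rpow_le_rpow hmpos.le (min_le_left _ _) (by linarith)
      have e2 : m ^ η ≤ (1/r^2) ^ η :=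
        Real.rpow_le_rpow hmpos.le (min_le_right _ _) hη0.le
      have e3 : (s^2 : ℝ) ^ (1-η) = s ^ (2-2*η) := by
        rw [← Real.rpow_natCast s 2, ← Real.rpow_mul hs.le]; norm_num; ring_nf
      have e4 : ((1/r^2 : ℝ)) ^ η = (r^2) ^ (-η) := by
        rw [Real.rpow_neg hr2.le, ← Real.inv_rpow hr2.le, one_div]
      calc m ^ (1-η) * m ^ η ≤ (s^2) ^ (1-η) * (1/r^2) ^ η :=
            mul_le_mul e1 e2 (Real.rpow_nonneg hmpos.le _) (Real.rpow_nonneg (by positivity) _)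
        _ = s ^ (2-2*η) * (r^2) ^ (-η) := by rw [e3, e4]
    have h5 : (r^2 : ℝ) ^ (-η) ≤ 2 ^ η * (1 + r^2) ^ (-η) := by
      have h6 : ((2:ℝ) * r^2) ^ (-η) ≤ (1 + r^2) ^ (-η) :=
        Real.rpow_le_rpow_of_nonpos hb (by linarith) (by linarith)
      have h7 : ((2:ℝ) * r^2) ^ (-η) = 2 ^ (-η) * (r^2) ^ (-η) :=
        Real.mul_rpow (by norm_num) hr2.le
      calc (r^2:ℝ) ^ (-η) = 2 ^ η * (2 ^ (-η) * (r^2) ^ (-η)) := by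
            rw [← mul_assoc, e, one_mul]
        _ = 2 ^ η * ((2 * r^2) ^ (-η)) := by rw [h7]
        _ ≤ 2 ^ η * (1 + r^2) ^ (-η) := mul_le_mul_of_nonneg_left h6 hp.le
    calc v ≤ s ^ (2-2*η) * (r^2) ^ (-η) := hm.trans hmin
      _ ≤ s ^ (2-2*η) * (2 ^ η * (1 + r^2) ^ (-η)) :=
          mul_le_mul_of_nonneg_left h5 (Real.rpow_nonneg hs.le _)
      _ = (2 ^ η * 1) * s ^ (2-2*η) * (1 + r^2) ^ (-η) := by ring
      _ ≤ (2 ^ η * (T ^ (2*η) + 1)) * s ^ (2-2*η) * (1 + r^2) ^ (-η) := by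
          have := Real.rpow_nonneg hs.le (2-2*η)
          have := Real.rpow_nonneg hb.le (-η)
          gcongr

/-- Upper bound `∫₀^t ∫_{ℝ^d} |𝓕Γ^d_s(ξ)|² μ(dξ) ds ≤ d₃ t^{3-2η}` for the wave
kernel, where `|𝓕Γ^d_s(ξ)|² = (sin(2πs|ξ|)/(2π|ξ|))²` (with value `s²` at `ξ = 0`),
under Hypothesis `H_η` on the spectral measure `μ`. -/
theorem wave_fourier_spectral_upper_bound
    (d : ℕ) (hd : 1 ≤ d)
    (η : ℝ) (hη : η ∈ Set.Ioo (0 : ℝ) 1)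
    (μ : Measure (EuclideanSpace ℝ (Fin d)))
    (hμint : ∫⁻ ξ, ENNReal.ofReal ((1 + ‖ξ‖ ^ 2) ^ (-η)) ∂μ < ⊤)
    (T : ℝ) (hT : 0 < T)
    (f : ℝ → EuclideanSpace ℝ (Fin d) → ℝ)
    (hf : ∀ (s : ℝ) (ξ : EuclideanSpace ℝ (Fin d)),
      f s ξ = if ξ = 0 then s ^ 2
              else (Real.sin (2 * π * s * ‖ξ‖) / (2 * π * ‖ξ‖)) ^ 2) :
    ∃ d₃ > (0 : ℝ), ∀ t ∈ Set.Icc (0 : ℝ) T,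
      (∫⁻ s in Set.Ioc (0 : ℝ) t, ∫⁻ ξ, ENNReal.ofReal (f s ξ) ∂μ)
        ≤ ENNReal.ofReal (d₃ * t ^ (3 - 2 * η)) := by
  obtain ⟨hη0, hη1⟩ := hη
  set C : ℝ := 2 ^ η * (T ^ (2 * η) + 1) with hCdef
  have hC : 0 < C := by
    have := Real.rpow_pos_of_pos (show (0:ℝ) < 2 by norm_num) η
    have : (0:ℝ) ≤ T ^ (2*η) := by positivity
    positivity
  set K : ENNReal := ∫⁻ ξ, ENNReal.ofReal ((1 + ‖ξ‖ ^ 2) ^ (-η)) ∂μ with hKdef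
  set K' : ℝ := K.toReal with hK'def
  have hK'0 : 0 ≤ K' := ENNReal.toReal_nonneg
  have hKK : K = ENNReal.ofReal K' := (ENNReal.ofReal_toReal hμint.ne).symm
  have h3 : (0:ℝ) < 3 - 2 * η := by linarith
  refine ⟨C * K' / (3 - 2 * η) + 1, by positivity, fun t ht => ?_⟩
  -- pointwise bound
  have hbound : ∀ s ∈ Set.Ioc (0:ℝ) t, ∀ ξ : EuclideanSpace ℝ (Fin d),
      f s ξ ≤ C * s ^ (2 - 2 * η) * (1 + ‖ξ‖ ^ 2) ^ (-η) := by
    intro s hs ξ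
    have hs0 : 0 < s := hs.1
    have hsT : s ≤ T := hs.2.trans ht.2
    have hv1 : f s ξ ≤ s ^ 2 := by
      rw [hf]
      split_ifs with h
      · exact le_rfl
      · have hn : (0:ℝ) < ‖ξ‖ := norm_pos_iff.mpr h
        have hc : (0:ℝ) < 2 * π * ‖ξ‖ := by positivity
        rw [div_pow, div_le_iff₀ (by positivity)]
        calc Real.sin (2*π*s*‖ξ‖) ^ 2 ≤ (2*π*s*‖ξ‖) ^ 2 := Real.sin_sq_le_sq
          _ = s ^ 2 * (2*π*‖ξ‖) ^ 2 := by ring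
    have hv2 : ‖ξ‖ ≠ 0 → f s ξ ≤ 1 / ‖ξ‖ ^ 2 := by
      intro hn0
      have h : ξ ≠ 0 := fun h => hn0 (by simp [h])
      have hn : (0:ℝ) < ‖ξ‖ := norm_pos_iff.mpr h
      rw [hf]; simp only [h, if_false]
      rw [div_pow, div_le_div_iff₀ (by positivity) (by positivity)]
      have h1 : Real.sin (2*π*s*‖ξ‖) ^ 2 ≤ 1 := by
        nlinarith [Real.neg_one_le_sin (2*π*s*‖ξ‖), Real.sin_le_one (2*π*s*‖ξ‖)]
      have h2 : ‖ξ‖ ^ 2 ≤ (2*π*‖ξ‖) ^ 2 := by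
        have hπ : (9:ℝ) ≤ π ^ 2 := by nlinarith [Real.pi_gt_three]
        nlinarith [mul_le_mul_of_nonneg_right hπ (sq_nonneg ‖ξ‖), sq_nonneg ‖ξ‖]
      nlinarith [sq_nonneg (Real.sin (2*π*s*‖ξ‖)), sq_nonneg ‖ξ‖]
    exact ptwise η T hη0 hη1 hT s hs0 hsT ‖ξ‖ (norm_nonneg ξ) _ hv1 hv2
  calc (∫⁻ s in Set.Ioc (0 : ℝ) t, ∫⁻ ξ, ENNReal.ofReal (f s ξ) ∂μ)
      ≤ ∫⁻ s in Set.Ioc (0:ℝ) t,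
          ENNReal.ofReal C * (ENNReal.ofReal (s ^ (2 - 2*η)) * K) := by
        refine lintegral_mono_ae ?_
        filter_upwards [ae_restrict_mem measurableSet_Ioc] with s hs
        calc (∫⁻ ξ, ENNReal.ofReal (f s ξ) ∂μ)
            ≤ ∫⁻ ξ, ENNReal.ofReal (C * s ^ (2-2*η)) *
                ENNReal.ofReal ((1 + ‖ξ‖ ^ 2) ^ (-η)) ∂μ := by
              refine lintegral_mono fun ξ => ?_
              rw [← ENNReal.ofReal_mul (mul_nonneg hC.le (Real.rpow_nonneg hs.1.le _))]
              exact ENNReal.ofReal_le_ofReal (hbound s hs ξ)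
          _ = ENNReal.ofReal (C * s ^ (2-2*η)) * K :=
              lintegral_const_mul' _ _ ENNReal.ofReal_ne_top
          _ = ENNReal.ofReal C * (ENNReal.ofReal (s ^ (2-2*η)) * K) := by
              rw [ENNReal.ofReal_mul hC.le, mul_assoc]
    _ = ENNReal.ofReal C * ((∫⁻ s in Set.Ioc (0:ℝ) t,
          ENNReal.ofReal (s ^ (2 - 2*η))) * K) := by
        rw [lintegral_const_mul' _ _ ENNReal.ofReal_ne_top,
          lintegral_mul_const' _ _ hμint.ne]
    _ = ENNReal.ofReal C * (ENNReal.ofReal (t ^ (3 - 2*η) / (3 - 2*η)) * K) := by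
        congr 2
        have hint : IntegrableOn (fun s : ℝ => s ^ (2 - 2*η)) (Set.Ioc 0 t) :=
          (intervalIntegral.intervalIntegrable_rpow' (by linarith : (-1:ℝ) < 2 - 2*η)).1
        rw [← MeasureTheory.ofReal_integral_eq_lintegral_ofReal hint ?_]
        · congr 1
          rw [← intervalIntegral.integral_of_le ht.1,
            integral_rpow (Or.inl (by linarith : (-1:ℝ) < 2 - 2*η))]
          rw [Real.zero_rpow (by linarith : (2:ℝ) - 2*η + 1 ≠ 0)]
          norm_num
          ring_nf
        · filter_upwards [ae_restrict_mem measurableSet_Ioc] with s hs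
          exact Real.rpow_nonneg hs.1.le _
    _ ≤ ENNReal.ofReal ((C * K' / (3 - 2*η) + 1) * t ^ (3 - 2*η)) := by
        have htn : (0:ℝ) ≤ t ^ (3 - 2*η) := Real.rpow_nonneg ht.1 _
        rw [hKK, ← ENNReal.ofReal_mul (div_nonneg htn h3.le), ← ENNReal.ofReal_mul hC.le]
        refine ENNReal.ofReal_le_ofReal ?_
        have : C * (t ^ (3-2*η) / (3-2*η) * K') = (C * K' / (3-2*η)) * t ^ (3-2*η) := by
          ring
        rw [this]
        exact mul_le_mul_of_nonneg_right (by linarith) htn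
end

section
/- Let d ≥ 1 and let μ be a nonzero nonnegative Borel measure on ℝ^d with ∫_{ℝ^d} (1 + |ξ|²)^{-1} μ(dξ) < ∞. Define f_s(ξ) = ( sin(2π s |ξ|) / (2π |ξ|) )² for ξ ≠ 0 and f_s(0) = s². Then there exist constants d₁, d₂ > 0 such that for all t ∈ [0, 1]: d₁ · t³ ≤ ∫₀^t ∫_{ℝ^d} f_s(ξ) μ(dξ) ds ≤ d₂ · t. -/
open MeasureTheory Real
open scoped Real Classical

lemma wave_upper_pt {E : Type*} [NormedAddCommGroup E] (s : ℝ) (hs0 : 0 ≤ s) (hs1 : s ≤ 1)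
    (ξ : E) (v : ℝ) (hv : v = if ξ = 0 then s ^ 2
      else (Real.sin (2 * π * s * ‖ξ‖) / (2 * π * ‖ξ‖)) ^ 2) :
    v ≤ 2 * (1 + ‖ξ‖ ^ 2)⁻¹ := by
  have hπ : (3:ℝ) < π := Real.pi_gt_three
  by_cases h0 : ξ = 0
  · rw [hv, if_pos h0, h0]
    simp only [norm_zero]
    norm_num
    nlinarith
  · rw [hv, if_neg h0]
    have hr : 0 < ‖ξ‖ := norm_pos_iff.mpr h0
    set a := ‖ξ‖
    rw [div_pow, show (2:ℝ) * (1 + a ^ 2)⁻¹ = 2 / (1 + a ^ 2) by ring,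
      div_le_div_iff₀ (by positivity) (by positivity)]
    have hS1 : Real.sin (2 * π * s * a) ^ 2 ≤ 1 := Real.sin_sq_le_one _
    have hS2 : Real.sin (2 * π * s * a) ^ 2 ≤ (2 * π * s * a) ^ 2 := Real.sin_sq_le_sq
    have hπ2 : (9:ℝ) < π ^ 2 := by nlinarith
    rcases le_total a 1 with hle | hle
    · have hbound : Real.sin (2 * π * s * a) ^ 2 ≤ 4 * π ^ 2 * a ^ 2 := by
        nlinarith [mul_nonneg (mul_nonneg (mul_nonneg (by positivity : (0:ℝ) ≤ 4 * π ^ 2) (sq_nonneg a)) (sub_nonneg.2 hs1)) (by linarith : (0:ℝ) ≤ 1 + s)]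
      have e1 : (4 * π ^ 2 * a ^ 2 - Real.sin (2 * π * s * a) ^ 2) * (1 + a ^ 2) ≥ 0 :=
        mul_nonneg (by linarith) (by positivity)
      have e2 : 4 * π ^ 2 * a ^ 2 * (1 - a ^ 2) ≥ 0 := by
        apply mul_nonneg (by positivity)
        nlinarith
      nlinarith [e1, e2]
    · have e1 : Real.sin (2 * π * s * a) ^ 2 * (1 + a ^ 2) ≤ 1 + a ^ 2 := by
        nlinarith [mul_nonneg (sub_nonneg.2 hS1) (by positivity : (0:ℝ) ≤ 1 + a ^ 2)]
      have e2 : (1:ℝ) + a ^ 2 ≤ 2 * a ^ 2 := by nlinarith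
      have e3 : 2 * a ^ 2 ≤ 8 * π ^ 2 * a ^ 2 := by
        nlinarith [mul_nonneg (sq_nonneg a) (by linarith : (0:ℝ) ≤ π ^ 2 - 9)]
      nlinarith [e1, e2, e3]

lemma wave_lower_pt {E : Type*} [NormedAddCommGroup E] (s : ℝ) (hs : 0 < s)
    (ξ : E) (hsξ : s * ‖ξ‖ ≤ 1 / 4) (v : ℝ) (hv : v = if ξ = 0 then s ^ 2
      else (Real.sin (2 * π * s * ‖ξ‖) / (2 * π * ‖ξ‖)) ^ 2) :
    (2 / π * s) ^ 2 ≤ v := by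
  have hπ : (3:ℝ) < π := Real.pi_gt_three
  by_cases h0 : ξ = 0
  · rw [hv, if_pos h0]
    have hπ2 : (9:ℝ) < π ^ 2 := by nlinarith
    rw [mul_pow, div_pow, div_mul_eq_mul_div, div_le_iff₀ (by positivity)]
    nlinarith [mul_nonneg (by linarith : (0:ℝ) ≤ π ^ 2 - 9) (sq_nonneg s)]
  · rw [hv, if_neg h0]
    have hr : 0 < ‖ξ‖ := norm_pos_iff.mpr h0
    set a := ‖ξ‖
    have hx2 : 2 * π * s * a ≤ π / 2 := by nlinarith
    have h1 : 2 / π * (2 * π * s * a) ≤ Real.sin (2 * π * s * a) :=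
      Real.mul_le_sin (by positivity) hx2
    have h2 : 2 / π * s ≤ Real.sin (2 * π * s * a) / (2 * π * a) := by
      rw [le_div_iff₀ (by positivity)]
      calc 2 / π * s * (2 * π * a) = 2 / π * (2 * π * s * a) := by ring
        _ ≤ _ := h1
    exact pow_le_pow_left₀ (by positivity) h2 2

/-- Two-sided bound `d₁ t³ ≤ ∫₀^t ∫_{ℝ^d} |𝓕Γ^d_s(ξ)|² μ(dξ) ds ≤ d₂ t` for `t ∈ [0,1]`,
where `|𝓕Γ^d_s(ξ)|² = (sin(2πs|ξ|)/(2π|ξ|))²` (value `s²` at `ξ = 0`), under Dalang's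
condition on the nonzero spectral measure `μ`. -/
theorem wave_fourier_spectral_two_sided_bound
    (d : ℕ) (hd : 1 ≤ d)
    (μ : Measure (EuclideanSpace ℝ (Fin d))) (hμ : μ ≠ 0)
    (hdalang : ∫⁻ ξ, ENNReal.ofReal ((1 + ‖ξ‖ ^ 2)⁻¹) ∂μ < ⊤)
    (f : ℝ → EuclideanSpace ℝ (Fin d) → ℝ)
    (hf : ∀ (s : ℝ) (ξ : EuclideanSpace ℝ (Fin d)),
      f s ξ = if ξ = 0 then s ^ 2
              else (Real.sin (2 * π * s * ‖ξ‖) / (2 * π * ‖ξ‖)) ^ 2) :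
    ∃ d₁ > (0 : ℝ), ∃ d₂ > (0 : ℝ), ∀ t ∈ Set.Icc (0 : ℝ) 1,
      ENNReal.ofReal (d₁ * t ^ 3)
          ≤ (∫⁻ s in Set.Ioc (0 : ℝ) t, ∫⁻ ξ, ENNReal.ofReal (f s ξ) ∂μ) ∧
      (∫⁻ s in Set.Ioc (0 : ℝ) t, ∫⁻ ξ, ENNReal.ofReal (f s ξ) ∂μ)
          ≤ ENNReal.ofReal (d₂ * t) := by
  have hπ : (3:ℝ) < π := Real.pi_gt_three
  set K := ∫⁻ ξ, ENNReal.ofReal ((1 + ‖ξ‖ ^ 2)⁻¹) ∂μ with hK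
  have hKne : K ≠ ⊤ := hdalang.ne
  -- find a ball with positive measure
  obtain ⟨n, hn⟩ : ∃ n : ℕ, μ (Metric.closedBall 0 n) ≠ 0 := by
    by_contra h
    push_neg at h
    apply hμ
    have h1 : μ Set.univ = 0 := by
      rw [← Metric.iUnion_closedBall_nat (0 : EuclideanSpace ℝ (Fin d))]
      exact measure_iUnion_null h
    exact Measure.measure_univ_eq_zero.mp h1
  set R : ℝ := (n : ℝ) + 1 with hR
  have hR1 : (1:ℝ) ≤ R := by rw [hR]; linarith [Nat.cast_nonneg (α:=ℝ) n]
  set B := Metric.closedBall (0 : EuclideanSpace ℝ (Fin d)) R with hB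
  set m := μ B with hm
  have hm0 : m ≠ 0 := by
    intro h
    exact hn (measure_mono_null (Metric.closedBall_subset_closedBall (by simp [hR])) h)
  have hmtop : m ≠ ⊤ := by
    intro htop
    have hconst : ENNReal.ofReal ((1 + R ^ 2)⁻¹) * m ≤ K := by
      calc ENNReal.ofReal ((1 + R ^ 2)⁻¹) * m
          = ∫⁻ _ in B, ENNReal.ofReal ((1 + R ^ 2)⁻¹) ∂μ := (setLIntegral_const _ _).symm
        _ ≤ ∫⁻ ξ in B, ENNReal.ofReal ((1 + ‖ξ‖ ^ 2)⁻¹) ∂μ := by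
            refine setLIntegral_mono' (measurableSet_closedBall) fun ξ hξ => ?_
            refine ENNReal.ofReal_le_ofReal ?_
            have hξR : ‖ξ‖ ≤ R := by rwa [hB, Metric.mem_closedBall, dist_zero_right] at hξ
            have : (1:ℝ) + ‖ξ‖ ^ 2 ≤ 1 + R ^ 2 := by nlinarith [norm_nonneg ξ]
            exact inv_anti₀ (by positivity) this
        _ ≤ K := setLIntegral_le_lintegral _ _
    rw [htop, ENNReal.mul_top (ENNReal.ofReal_pos.mpr (by positivity)).ne'] at hconst
    exact hKne (top_le_iff.mp hconst)
  set c : ℝ := 1 / (4 * R) with hc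
  have hc0 : 0 < c := by positivity
  have hc1 : c ≤ 1 := by
    rw [hc, div_le_one (by positivity)]; linarith
  refine ⟨c ^ 3 * m.toReal / (2 * π ^ 2),
    div_pos (mul_pos (pow_pos hc0 3) (ENNReal.toReal_pos hm0 hmtop)) (by positivity),
    2 * K.toReal + 1, by positivity, fun t ht => ?_⟩
  obtain ⟨ht0, ht1⟩ := ht
  constructor
  · -- lower bound
    have hsub : Set.Ioc (c * t / 2) (c * t) ⊆ Set.Ioc 0 t :=
      Set.Ioc_subset_Ioc (by positivity) (by nlinarith)
    calc ENNReal.ofReal (c ^ 3 * m.toReal / (2 * π ^ 2) * t ^ 3)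
        = ENNReal.ofReal ((2 / π * (c * t / 2)) ^ 2 * m.toReal) * volume (Set.Ioc (c*t/2) (c*t)) := by
          rw [Real.volume_Ioc, ← ENNReal.ofReal_mul (by positivity)]
          congr 1
          have : c * t - c * t / 2 = c * t / 2 := by ring
          rw [this]
          field_simp
      _ = ∫⁻ _ in Set.Ioc (c*t/2) (c*t), ENNReal.ofReal ((2 / π * (c * t / 2)) ^ 2) * m ∂volume := by
          rw [setLIntegral_const, ENNReal.ofReal_mul (by positivity),
            ENNReal.ofReal_toReal hmtop, mul_assoc]
      _ ≤ ∫⁻ s in Set.Ioc (c*t/2) (c*t), (∫⁻ ξ, ENNReal.ofReal (f s ξ) ∂μ) ∂volume := by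
          refine setLIntegral_mono' measurableSet_Ioc fun s hs => ?_
          obtain ⟨hs1, hs2⟩ := hs
          have hspos : 0 < s := lt_of_le_of_lt (by positivity) hs1
          calc ENNReal.ofReal ((2 / π * (c * t / 2)) ^ 2) * m
              = ∫⁻ _ in B, ENNReal.ofReal ((2 / π * (c * t / 2)) ^ 2) ∂μ :=
                (setLIntegral_const _ _).symm
            _ ≤ ∫⁻ ξ in B, ENNReal.ofReal (f s ξ) ∂μ := by
                refine setLIntegral_mono' measurableSet_closedBall fun ξ hξ => ?_
                refine ENNReal.ofReal_le_ofReal ?_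
                have hξR : ‖ξ‖ ≤ R := by rwa [hB, Metric.mem_closedBall, dist_zero_right] at hξ
                have hsξ : s * ‖ξ‖ ≤ 1 / 4 := by
                  have h1 : s ≤ c * t := hs2
                  have h2 : c * t ≤ c := by nlinarith
                  have h3 : s * ‖ξ‖ ≤ c * R := by
                    have := norm_nonneg ξ
                    nlinarith
                  rw [hc] at h3
                  calc s * ‖ξ‖ ≤ 1 / (4 * R) * R := h3
                    _ = 1 / 4 := by field_simp
                have hkey : (2 / π * s) ^ 2 ≤ f s ξ := wave_lower_pt s hspos ξ hsξ _ (by convert hf s ξ)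
                have hmono : (2 / π * (c * t / 2)) ^ 2 ≤ (2 / π * s) ^ 2 := by
                  apply pow_le_pow_left₀ (by positivity)
                  exact mul_le_mul_of_nonneg_left hs1.le (by positivity)
                linarith
            _ ≤ ∫⁻ ξ, ENNReal.ofReal (f s ξ) ∂μ := setLIntegral_le_lintegral _ _
      _ ≤ ∫⁻ s in Set.Ioc 0 t, (∫⁻ ξ, ENNReal.ofReal (f s ξ) ∂μ) ∂volume :=
          lintegral_mono_set hsub
  · -- upper bound
    calc ∫⁻ s in Set.Ioc 0 t, (∫⁻ ξ, ENNReal.ofReal (f s ξ) ∂μ) ∂volume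
        ≤ ∫⁻ _ in Set.Ioc 0 t, 2 * K ∂volume := by
          refine setLIntegral_mono' measurableSet_Ioc fun s hs => ?_
          obtain ⟨hs1, hs2⟩ := hs
          calc ∫⁻ ξ, ENNReal.ofReal (f s ξ) ∂μ
              ≤ ∫⁻ ξ, 2 * ENNReal.ofReal ((1 + ‖ξ‖ ^ 2)⁻¹) ∂μ := by
                refine lintegral_mono fun ξ => ?_
                have h1 : f s ξ ≤ 2 * (1 + ‖ξ‖ ^ 2)⁻¹ :=
                  wave_upper_pt s hs1.le (le_trans hs2 ht1) ξ _ (by convert hf s ξ)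
                calc ENNReal.ofReal (f s ξ) ≤ ENNReal.ofReal (2 * (1 + ‖ξ‖ ^ 2)⁻¹) :=
                      ENNReal.ofReal_le_ofReal h1
                  _ = 2 * ENNReal.ofReal ((1 + ‖ξ‖ ^ 2)⁻¹) := by
                      rw [ENNReal.ofReal_mul (by norm_num)]
                      norm_num
            _ = 2 * K := lintegral_const_mul' 2 _ (by simp)
      _ = 2 * K * ENNReal.ofReal t := by
          rw [setLIntegral_const, Real.volume_Ioc, sub_zero]
      _ ≤ ENNReal.ofReal (2 * K.toReal + 1) * ENNReal.ofReal t := by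
          gcongr
          calc 2 * K = ENNReal.ofReal (2 * K.toReal) := by
                rw [ENNReal.ofReal_mul (by norm_num), ENNReal.ofReal_toReal hKne]
                norm_num
            _ ≤ ENNReal.ofReal (2 * K.toReal + 1) := ENNReal.ofReal_le_ofReal (by linarith)
      _ = ENNReal.ofReal ((2 * K.toReal + 1) * t) := by
          rw [← ENNReal.ofReal_mul (by positivity)]
end

section
/- Let t₀ < t₁ be real numbers, let a, b ≥ 0, and let f : [t₀, t₁] → [0, ∞) be a bounded measurable function satisfying f(ν) ≤ a + b · ∫_{t₀}^{ν} f(s) · (ν − s)^{-1/2} ds for every ν ∈ [t₀, t₁]. Then there exists a constant C > 0, depending only on b and t₁ − t₀ (and not on a or f), such that f(ν) ≤ C · a for every ν ∈ [t₀, t₁]. -/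
open MeasureTheory Real
open scoped Real

lemma inv_sqrt_eq_rpow (x : ℝ) : (Real.sqrt x)⁻¹ = x ^ (-(1/2) : ℝ) := by
  rcases le_or_gt 0 x with hx | hx
  · rw [Real.rpow_neg hx, Real.sqrt_eq_rpow]
  · rw [Real.sqrt_eq_zero'.mpr hx.le, inv_zero]
    rw [Real.rpow_def_of_neg hx]
    have : Real.cos (-(1/2) * π) = 0 := by
      rw [neg_mul, Real.cos_neg, show (1/2) * π = π / 2 by ring]
      exact Real.cos_pi_div_two
    rw [this, mul_zero]

lemma kernel_integral (ν u c : ℝ) (huc : u ≤ c) (hcν : c ≤ ν) :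
    ∫ s in u..c, (Real.sqrt (ν - s))⁻¹ =
      2 * Real.sqrt (ν - u) - 2 * Real.sqrt (ν - c) := by
  simp only [inv_sqrt_eq_rpow]
  rw [intervalIntegral.integral_comp_sub_left (fun x : ℝ => x ^ (-(1/2) : ℝ)) ν]
  rw [integral_rpow (Or.inl (by norm_num))]
  norm_num
  rw [← Real.sqrt_eq_rpow, ← Real.sqrt_eq_rpow]
  ring

lemma kernel_intervalIntegrable (ν u c : ℝ) :
    IntervalIntegrable (fun s => (Real.sqrt (ν - s))⁻¹) volume u c := by
  have k1 : IntervalIntegrable (fun x : ℝ => x ^ (-(1/2) : ℝ)) volume (ν - u) (ν - c) :=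
    intervalIntegral.intervalIntegrable_rpow' (by norm_num)
  have k2 := k1.comp_sub_left ν
  simp only [sub_sub_cancel] at k2
  simpa only [inv_sqrt_eq_rpow] using k2

lemma mul_kernel_intervalIntegrable (f : ℝ → ℝ) (hf : Measurable f)
    (t₀ t₁ ν B : ℝ) (hbd : ∀ s ∈ Set.Icc t₀ t₁, |f s| ≤ B)
    (u c : ℝ) (hu : t₀ ≤ u) (huc : u ≤ c) (hc : c ≤ t₁) :
    IntervalIntegrable (fun s => f s * (Real.sqrt (ν - s))⁻¹) volume u c := by
  rw [intervalIntegrable_iff_integrableOn_Icc_of_le huc]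
  apply Integrable.bdd_mul (c := B)
    ((intervalIntegrable_iff_integrableOn_Icc_of_le huc).mp (kernel_intervalIntegrable ν u c))
  · exact hf.aestronglyMeasurable.restrict
  · refine (ae_restrict_iff' measurableSet_Icc).mpr (Filter.Eventually.of_forall fun x hx => ?_)
    rw [Real.norm_eq_abs]
    exact hbd x ⟨hu.trans hx.1, hx.2.trans hc⟩

/-- Gronwall-type lemma with the singular kernel `(ν - s)^{-1/2}`: if a bounded
nonnegative measurable `f` on `[t₀, t₁]` satisfies
`f(ν) ≤ a + b ∫_{t₀}^ν f(s) (ν - s)^{-1/2} ds`, then `f(ν) ≤ C a`, where `C`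
depends only on `b` and `L = t₁ - t₀`. -/
theorem gronwall_singular_kernel (b L : ℝ) (hb : 0 ≤ b) (hL : 0 < L) :
    ∃ C > (0 : ℝ), ∀ t₀ t₁ : ℝ, t₀ < t₁ → t₁ - t₀ = L →
      ∀ a : ℝ, 0 ≤ a → ∀ f : ℝ → ℝ, Measurable f →
        (∀ s ∈ Set.Icc t₀ t₁, 0 ≤ f s) →
        (∃ M : ℝ, ∀ s ∈ Set.Icc t₀ t₁, f s ≤ M) →
        (∀ ν ∈ Set.Icc t₀ t₁,
          f ν ≤ a + b * ∫ s in t₀..ν, f s * (Real.sqrt (ν - s))⁻¹) →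
        ∀ ν ∈ Set.Icc t₀ t₁, f ν ≤ C * a := by
  have hsL : 0 ≤ Real.sqrt L := Real.sqrt_nonneg L
  set q : ℝ := 3 + 4 * b * Real.sqrt L with hq
  have hq1 : 1 ≤ q := by nlinarith
  set δ : ℝ := (1 / (4 * (b + 1))) ^ 2 with hδ
  have hδpos : 0 < δ := by positivity
  have hδsqrt : Real.sqrt δ = 1 / (4 * (b + 1)) := Real.sqrt_sq (by positivity)
  have hbδ : 2 * b * Real.sqrt δ ≤ 1 / 2 := by
    rw [hδsqrt]
    rw [mul_one_div, div_le_div_iff₀ (by positivity) (by norm_num)]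
    nlinarith
  set n : ℕ := ⌈L / δ⌉₊ with hn
  refine ⟨q ^ (n + 1), pow_pos (by linarith) _, ?_⟩
  intro t₀ t₁ ht hLdef a ha f hf hfpos hfbdd hineq
  obtain ⟨M, hM⟩ := hfbdd
  set B : ℝ := max M 0 with hB
  have habs : ∀ s ∈ Set.Icc t₀ t₁, |f s| ≤ B := fun s hs =>
    abs_le.mpr ⟨by have := hfpos s hs; simp only [hB]; linarith [le_max_right M 0],
      (hM s hs).trans (le_max_left M 0)⟩
  set E : ℕ → Set ℝ := fun k => Set.Icc t₀ (min (t₀ + (k : ℝ) * δ) t₁) with hE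
  have hEne : ∀ k, (E k).Nonempty := fun k =>
    ⟨t₀, le_refl _, le_min (le_add_of_nonneg_right (by positivity)) ht.le⟩
  have hEsub : ∀ k, E k ⊆ Set.Icc t₀ t₁ := fun k s hs =>
    ⟨hs.1, hs.2.trans (min_le_right _ _)⟩
  have hbdd : ∀ k, BddAbove (f '' E k) := by
    intro k
    refine ⟨B, ?_⟩
    rintro y ⟨s, hs, rfl⟩
    exact (hM s (hEsub k hs)).trans (le_max_left M 0)
  set S : ℕ → ℝ := fun k => sSup (f '' E k) with hS
  have hS_ge : ∀ k, ∀ s ∈ E k, f s ≤ S k := fun k s hs =>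
    le_csSup (hbdd k) ⟨s, hs, rfl⟩
  have ht₀E : ∀ k, t₀ ∈ E k := fun k => ⟨le_refl _, le_min (le_add_of_nonneg_right (by positivity)) ht.le⟩
  have hSnn : ∀ k, 0 ≤ S k := fun k =>
    (hfpos t₀ ⟨le_refl _, ht.le⟩).trans (hS_ge k t₀ (ht₀E k))
  have hS0 : S 0 ≤ a := by
    apply csSup_le ((hEne 0).image f)
    rintro y ⟨s, hs, rfl⟩
    have hs' : s = t₀ := by
      simp only [hE, Set.mem_Icc, Nat.cast_zero, zero_mul, add_zero,
        min_eq_left ht.le] at hs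
      linarith [hs.1, hs.2]
    subst hs'
    have := hineq s ⟨le_refl _, ht.le⟩
    simpa using this
  -- key recursive estimate
  have hstep : ∀ k, S (k + 1) ≤ 2 * a + 4 * b * Real.sqrt L * S k := by
    intro k
    have hpt : ∀ ν' ∈ E (k + 1),
        f ν' ≤ a + 2 * b * Real.sqrt L * S k + (1 / 2) * S (k + 1) := by
      intro ν' hν'
      obtain ⟨hν'1, hν'2⟩ := hν'
      have hν't₁ : ν' ≤ t₁ := hν'2.trans (min_le_right _ _)
      have hν'kδ : ν' ≤ t₀ + ((k : ℝ) + 1) * δ := by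
        have := hν'2.trans (min_le_left _ _)
        push_cast at this
        linarith
      set m : ℝ := max t₀ (ν' - δ) with hm
      have hm1 : t₀ ≤ m := le_max_left _ _
      have hm2 : m ≤ ν' := max_le hν'1 (by linarith)
      have hmt₁ : m ≤ t₁ := hm2.trans hν't₁
      have hmkδ : m ≤ t₀ + (k : ℝ) * δ := by
        apply max_le
        · exact le_add_of_nonneg_right (by positivity)
        · linarith
      have hmE : ∀ s ∈ Set.Icc t₀ m, s ∈ E k := fun s hs =>
        ⟨hs.1, le_min (hs.2.trans hmkδ) (hs.2.trans hmt₁)⟩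
      have hI1 : IntervalIntegrable (fun s => f s * (Real.sqrt (ν' - s))⁻¹) volume t₀ m :=
        mul_kernel_intervalIntegrable f hf t₀ t₁ ν' B habs t₀ m (le_refl _) hm1 hmt₁
      have hI2 : IntervalIntegrable (fun s => f s * (Real.sqrt (ν' - s))⁻¹) volume m ν' :=
        mul_kernel_intervalIntegrable f hf t₀ t₁ ν' B habs m ν' hm1 hm2 hν't₁
      have hsplit : (∫ s in t₀..ν', f s * (Real.sqrt (ν' - s))⁻¹) =
          (∫ s in t₀..m, f s * (Real.sqrt (ν' - s))⁻¹) +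
            ∫ s in m..ν', f s * (Real.sqrt (ν' - s))⁻¹ :=
        (intervalIntegral.integral_add_adjacent_intervals hI1 hI2).symm
      have hker_nn : ∀ s : ℝ, 0 ≤ (Real.sqrt (ν' - s))⁻¹ := fun s => by positivity
      have hb1 : (∫ s in t₀..m, f s * (Real.sqrt (ν' - s))⁻¹) ≤ S k * (2 * Real.sqrt L) := by
        have step1 : (∫ s in t₀..m, f s * (Real.sqrt (ν' - s))⁻¹) ≤
            ∫ s in t₀..m, S k * (Real.sqrt (ν' - s))⁻¹ := by
          apply intervalIntegral.integral_mono_on hm1 hI1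
            ((kernel_intervalIntegrable ν' t₀ m).const_mul _)
          intro s hs
          exact mul_le_mul_of_nonneg_right (hS_ge k s (hmE s hs)) (hker_nn s)
        have step2 : (∫ s in t₀..m, S k * (Real.sqrt (ν' - s))⁻¹) =
            S k * (2 * Real.sqrt (ν' - t₀) - 2 * Real.sqrt (ν' - m)) := by
          rw [intervalIntegral.integral_const_mul, kernel_integral ν' t₀ m hm1 hm2]
        have hle : 2 * Real.sqrt (ν' - t₀) - 2 * Real.sqrt (ν' - m) ≤ 2 * Real.sqrt L := by
          have h1 : Real.sqrt (ν' - t₀) ≤ Real.sqrt L :=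
            Real.sqrt_le_sqrt (by linarith)
          have h2 : 0 ≤ Real.sqrt (ν' - m) := Real.sqrt_nonneg _
          linarith
        calc (∫ s in t₀..m, f s * (Real.sqrt (ν' - s))⁻¹)
            ≤ S k * (2 * Real.sqrt (ν' - t₀) - 2 * Real.sqrt (ν' - m)) := by
              rw [← step2]; exact step1
          _ ≤ S k * (2 * Real.sqrt L) := mul_le_mul_of_nonneg_left hle (hSnn k)
      have hb2 : (∫ s in m..ν', f s * (Real.sqrt (ν' - s))⁻¹) ≤
          S (k + 1) * (2 * Real.sqrt δ) := by
        have hsE : ∀ s ∈ Set.Icc m ν', s ∈ E (k + 1) := fun s hs =>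
          ⟨hm1.trans hs.1, hs.2.trans hν'2⟩
        have step1 : (∫ s in m..ν', f s * (Real.sqrt (ν' - s))⁻¹) ≤
            ∫ s in m..ν', S (k + 1) * (Real.sqrt (ν' - s))⁻¹ := by
          apply intervalIntegral.integral_mono_on hm2 hI2
            ((kernel_intervalIntegrable ν' m ν').const_mul _)
          intro s hs
          exact mul_le_mul_of_nonneg_right (hS_ge (k + 1) s (hsE s hs)) (hker_nn s)
        have step2 : (∫ s in m..ν', S (k + 1) * (Real.sqrt (ν' - s))⁻¹) =
            S (k + 1) * (2 * Real.sqrt (ν' - m)) := by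
          rw [intervalIntegral.integral_const_mul, kernel_integral ν' m ν' hm2 (le_refl _)]
          rw [sub_self, Real.sqrt_zero]
          ring
        have hle : Real.sqrt (ν' - m) ≤ Real.sqrt δ := by
          apply Real.sqrt_le_sqrt
          have : ν' - δ ≤ m := le_max_right _ _
          linarith
        calc (∫ s in m..ν', f s * (Real.sqrt (ν' - s))⁻¹)
            ≤ S (k + 1) * (2 * Real.sqrt (ν' - m)) := by rw [← step2]; exact step1
          _ ≤ S (k + 1) * (2 * Real.sqrt δ) := by
              apply mul_le_mul_of_nonneg_left (by linarith) (hSnn (k + 1))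
      have hmain := hineq ν' ⟨hν'1, hν't₁⟩
      rw [hsplit] at hmain
      have h1 : b * ((∫ s in t₀..m, f s * (Real.sqrt (ν' - s))⁻¹) +
          ∫ s in m..ν', f s * (Real.sqrt (ν' - s))⁻¹) ≤
          b * (S k * (2 * Real.sqrt L) + S (k + 1) * (2 * Real.sqrt δ)) :=
        mul_le_mul_of_nonneg_left (add_le_add hb1 hb2) hb
      have h2 : b * (S (k + 1) * (2 * Real.sqrt δ)) ≤ (1 / 2) * S (k + 1) := by
        have heq : b * (S (k + 1) * (2 * Real.sqrt δ)) =
            (2 * b * Real.sqrt δ) * S (k + 1) := by ring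
        rw [heq]
        exact mul_le_mul_of_nonneg_right hbδ (hSnn (k + 1))
      have h3 : b * (S k * (2 * Real.sqrt L)) = 2 * b * Real.sqrt L * S k := by ring
      have h4 : b * (S k * (2 * Real.sqrt L) + S (k + 1) * (2 * Real.sqrt δ)) =
          b * (S k * (2 * Real.sqrt L)) + b * (S (k + 1) * (2 * Real.sqrt δ)) := by ring
      linarith
    have hs1 : S (k + 1) ≤ a + 2 * b * Real.sqrt L * S k + (1 / 2) * S (k + 1) := by
      apply csSup_le ((hEne (k + 1)).image f)
      rintro y ⟨s, hs, rfl⟩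
      exact hpt s hs
    linarith
  have hind : ∀ k, S k ≤ q ^ (k + 1) * a := by
    intro k
    induction k with
    | zero =>
      have : a ≤ q ^ 1 * a := by
        rw [pow_one]
        nlinarith
      exact hS0.trans this
    | succ k ih =>
      have hp : (1 : ℝ) ≤ q ^ (k + 1) := one_le_pow₀ hq1
      have h2 : 4 * b * Real.sqrt L * S k ≤ 4 * b * Real.sqrt L * (q ^ (k + 1) * a) :=
        mul_le_mul_of_nonneg_left ih (by positivity)
      have h3 : q ^ (k + 1 + 1) = q * q ^ (k + 1) := by rw [pow_succ]; ring
      have := hstep k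
      rw [h3, hq]
      nlinarith [mul_le_mul_of_nonneg_right hp ha]
  intro ν hν
  have hνE : ν ∈ E n := by
    refine ⟨hν.1, le_min ?_ hν.2⟩
    have h1 : L / δ ≤ (n : ℝ) := Nat.le_ceil _
    have h2 : L ≤ (n : ℝ) * δ := (div_le_iff₀ hδpos).mp h1
    linarith [hν.2]
  exact (hS_ge n ν hνE).trans (hind n)
end

section
/- Let T > 0 and η ∈ (0, 1). Then there exists a constant C > 0 such that for all t ∈ [0, T] and all r > 0: ∫₀^t ( sin(2π s r) / (2π r) )² ds ≤ C · t^{3 − 2η} · (1 + r²)^{−η}. -/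
open MeasureTheory Real
open scoped Real

/-- Pointwise-in-`ξ` estimate for the wave kernel:
`∫₀^t (sin(2πsr)/(2πr))² ds ≤ C t^{3-2η} (1 + r²)^{-η}` for `t ∈ [0,T]`, `r > 0`,
`η ∈ (0,1)`. -/
theorem wave_fourier_pointwise_bound (T : ℝ) (hT : 0 < T)
    (η : ℝ) (hη : η ∈ Set.Ioo (0 : ℝ) 1) :
    ∃ C > (0 : ℝ), ∀ t ∈ Set.Icc (0 : ℝ) T, ∀ r : ℝ, 0 < r →
      (∫ s in (0 : ℝ)..t, (Real.sin (2 * π * s * r) / (2 * π * r)) ^ 2)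
        ≤ C * t ^ (3 - 2 * η) * (1 + r ^ 2) ^ (-η) := by
  obtain ⟨hη0, hη1⟩ := hη
  have hπ := Real.pi_gt_three
  refine ⟨T ^ (2 * η) * 2 ^ η + 1, by positivity, ?_⟩
  intro t ht r hr
  obtain ⟨ht0, htT⟩ := ht
  have h2πr : (0 : ℝ) < 2 * π * r := by positivity
  have hcont : Continuous fun s => (Real.sin (2 * π * s * r) / (2 * π * r)) ^ 2 := by
    fun_prop
  have hintf : IntervalIntegrable
      (fun s => (Real.sin (2 * π * s * r) / (2 * π * r)) ^ 2) volume 0 t :=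
    hcont.intervalIntegrable 0 t
  have hrpow_nn : (0 : ℝ) ≤ t ^ (3 - 2 * η) * (1 + r ^ 2) ^ (-η) := by positivity
  -- key bound on `t^3` type terms
  have hs2 : ∀ s : ℝ, (Real.sin (2 * π * s * r) / (2 * π * r)) ^ 2 ≤ s ^ 2 := by
    intro s
    rw [div_pow]
    rw [div_le_iff₀ (by positivity)]
    calc Real.sin (2 * π * s * r) ^ 2 ≤ (2 * π * s * r) ^ 2 := Real.sin_sq_le_sq
      _ = s ^ 2 * (2 * π * r) ^ 2 := by ring
  rcases le_total r 1 with hr1 | hr1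
  · -- small r : bound integrand by s², integral by t³/3
    have hI : (∫ s in (0:ℝ)..t, (Real.sin (2 * π * s * r) / (2 * π * r)) ^ 2)
        ≤ ∫ s in (0:ℝ)..t, s ^ 2 := by
      apply intervalIntegral.integral_mono_on ht0 hintf
        (intervalIntegral.intervalIntegrable_pow 2)
      intro s _; exact hs2 s
    have hI2 : (∫ s in (0:ℝ)..t, s ^ 2) = t ^ 3 / 3 := by
      simp [integral_pow]
      norm_num
    rw [hI2] at hI
    refine hI.trans ?_
    -- t^3 ≤ T^(2η) t^(3-2η), 1 ≤ 2^η (1+r²)^(-η)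
    have h1 : t ^ 3 = t ^ (2 * η) * t ^ (3 - 2 * η) := by
      rw [← Real.rpow_add_of_nonneg ht0 (by positivity) (by linarith)]
      rw [show 2 * η + (3 - 2 * η) = ((3:ℕ):ℝ) by push_cast; ring, Real.rpow_natCast]
    have h2 : t ^ (2 * η) ≤ T ^ (2 * η) :=
      Real.rpow_le_rpow ht0 htT (by positivity)
    have h3 : (2:ℝ) ^ (-η) ≤ (1 + r ^ 2) ^ (-η) := by
      apply Real.rpow_le_rpow_of_nonpos (by positivity) (by nlinarith) (by linarith)
    have h4 : (1:ℝ) ≤ 2 ^ η * (1 + r ^ 2) ^ (-η) := by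
      have := mul_le_mul_of_nonneg_left h3 (show (0:ℝ) ≤ 2 ^ η by positivity)
      rwa [← Real.rpow_add (by norm_num), add_neg_cancel, Real.rpow_zero] at this
    have h5 : t ^ 3 ≤ T ^ (2 * η) * t ^ (3 - 2 * η) := by
      rw [h1]; exact mul_le_mul_of_nonneg_right h2 (by positivity)
    have h6 : t ^ 3 / 3 ≤ T ^ (2 * η) * t ^ (3 - 2 * η) * (2 ^ η * (1 + r ^ 2) ^ (-η)) := by
      calc t ^ 3 / 3 ≤ t ^ 3 := by nlinarith [pow_nonneg ht0 3]
        _ ≤ T ^ (2 * η) * t ^ (3 - 2 * η) := h5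
        _ = T ^ (2 * η) * t ^ (3 - 2 * η) * 1 := by ring
        _ ≤ _ := by
            apply mul_le_mul_of_nonneg_left h4 (by positivity)
    refine h6.trans ?_
    have hC : T ^ (2 * η) * 2 ^ η ≤ T ^ (2 * η) * 2 ^ η + 1 := by linarith
    calc T ^ (2 * η) * t ^ (3 - 2 * η) * (2 ^ η * (1 + r ^ 2) ^ (-η))
        = (T ^ (2 * η) * 2 ^ η) * (t ^ (3 - 2 * η) * (1 + r ^ 2) ^ (-η)) := by ring
      _ ≤ (T ^ (2 * η) * 2 ^ η + 1) * (t ^ (3 - 2 * η) * (1 + r ^ 2) ^ (-η)) :=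
          mul_le_mul_of_nonneg_right hC hrpow_nn
      _ = _ := by ring
  · -- large r : interpolation bound
    set c : ℝ := (4 * π ^ 2 * r ^ 2) with hc
    have hcpos : 0 < c := by positivity
    have hbd : ∀ s ∈ Set.Icc (0:ℝ) t,
        (Real.sin (2 * π * s * r) / (2 * π * r)) ^ 2 ≤ s ^ (2 - 2 * η) * c ^ (-η) := by
      intro s hs
      obtain ⟨hs0, _⟩ := hs
      set A := (Real.sin (2 * π * s * r) / (2 * π * r)) ^ 2 with hA
      have hA0 : 0 ≤ A := sq_nonneg _
      have hA1 : A ≤ s ^ 2 := hs2 s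
      have hA2 : A ≤ c⁻¹ := by
        rw [hA, div_pow]
        have h2 : (2 * π * r) ^ 2 = c := by rw [hc]; ring
        rw [h2, div_le_iff₀ hcpos, inv_mul_cancel₀ hcpos.ne']
        exact Real.sin_sq_le_one _
      have key : A = A ^ (1 - η) * A ^ η := by
        rw [← Real.rpow_add_of_nonneg hA0 (by linarith) (by linarith)]
        simp
      calc A = A ^ (1 - η) * A ^ η := key
        _ ≤ (s ^ 2) ^ (1 - η) * (c⁻¹) ^ η := by
            apply mul_le_mul (Real.rpow_le_rpow hA0 hA1 (by linarith))
              (Real.rpow_le_rpow hA0 hA2 (by linarith))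
              (Real.rpow_nonneg hA0 _) (Real.rpow_nonneg (by positivity) _)
        _ = s ^ (2 - 2 * η) * c ^ (-η) := by
            have hexp : ((2:ℕ):ℝ) * (1 - η) = 2 - 2 * η := by push_cast; ring
            rw [← Real.rpow_natCast s 2, ← Real.rpow_mul hs0, hexp,
              Real.inv_rpow hcpos.le, ← Real.rpow_neg hcpos.le]
    have hintg : IntervalIntegrable (fun s => s ^ (2 - 2 * η) * c ^ (-η)) volume 0 t :=
      (intervalIntegral.intervalIntegrable_rpow' (by linarith)).mul_const _
    have hI : (∫ s in (0:ℝ)..t, (Real.sin (2 * π * s * r) / (2 * π * r)) ^ 2)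
        ≤ ∫ s in (0:ℝ)..t, s ^ (2 - 2 * η) * c ^ (-η) :=
      intervalIntegral.integral_mono_on ht0 hintf hintg hbd
    have hI2 : (∫ s in (0:ℝ)..t, s ^ (2 - 2 * η) * c ^ (-η))
        = t ^ (3 - 2 * η) / (3 - 2 * η) * c ^ (-η) := by
      rw [intervalIntegral.integral_mul_const, integral_rpow (Or.inl (by linarith))]
      rw [show (2 - 2 * η) + 1 = 3 - 2 * η by ring,
        Real.zero_rpow (by linarith : (3:ℝ) - 2 * η ≠ 0)]
      ring
    rw [hI2] at hI
    refine hI.trans ?_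
    have hc1 : (1 : ℝ) + r ^ 2 ≤ c := by
      have hπ2 : (9:ℝ) ≤ π ^ 2 := by nlinarith
      have hr2 : (1:ℝ) ≤ r ^ 2 := by nlinarith
      rw [hc]; nlinarith [hπ2, hr2, sq_nonneg r]
    have h3 : c ^ (-η) ≤ (1 + r ^ 2) ^ (-η) :=
      Real.rpow_le_rpow_of_nonpos (by positivity) hc1 (by linarith)
    have h4 : t ^ (3 - 2 * η) / (3 - 2 * η) ≤ t ^ (3 - 2 * η) := by
      have h5 : (0:ℝ) ≤ t ^ (3 - 2 * η) := Real.rpow_nonneg ht0 _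
      rw [div_le_iff₀ (by linarith)]
      nlinarith
    calc t ^ (3 - 2 * η) / (3 - 2 * η) * c ^ (-η)
        ≤ t ^ (3 - 2 * η) * (1 + r ^ 2) ^ (-η) := by
          apply mul_le_mul h4 h3 (by positivity) (Real.rpow_nonneg ht0 _)
      _ = 1 * (t ^ (3 - 2 * η) * (1 + r ^ 2) ^ (-η)) := by ring
      _ ≤ (T ^ (2 * η) * 2 ^ η + 1) * (t ^ (3 - 2 * η) * (1 + r ^ 2) ^ (-η)) := by
          apply mul_le_mul_of_nonneg_right _ hrpow_nn
          have : (0:ℝ) ≤ T ^ (2 * η) * 2 ^ η := by positivity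
          linarith
      _ = _ := by ring
end
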